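/- Let $p>1$ and let $f:(0,\infty)\to[0,\infty)$ be measurable. Then $\int_0^\infty \left(\frac{1}{x}\int_0^x f(t)\,dt\right)^p dx \le \left(\frac{p}{p-1}\right)^p \int_0^\infty f(x)^p\,dx$. -/

import Mathlib

open MeasureTheory Set

lemma hlint_Ioo {c : ℝ} (hc : -1 < c) {x : ℝ} (hx : 0 < x) :
    ∫⁻ t in Ioo (0:ℝ) x, ENNReal.ofReal (t ^ c) = ENNReal.ofReal (x ^ (c+1) / (c+1)) := by
  rw [setLIntegral_congr (Ioo_ae_eq_Ioc (α := ℝ))]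
  have hInt : IntegrableOn (fun t : ℝ => t ^ c) (Ioc 0 x) :=
    (intervalIntegrable_iff_integrableOn_Ioc_of_le hx.le).mp (intervalIntegral.intervalIntegrable_rpow' hc)
  rw [← ofReal_integral_eq_lintegral_ofReal hInt ?_]
  · congr 1
    have := integral_rpow (a := 0) (b := x) (Or.inl hc)
    rw [intervalIntegral.integral_of_le hx.le] at this
    rw [this, Real.zero_rpow (by linarith : c + 1 ≠ 0)]
    ring
  · filter_upwards [ae_restrict_mem measurableSet_Ioc] with t ht
    exact Real.rpow_nonneg ht.1.le c

lemma hlint_Ioi {b : ℝ} (hb : b < -1) {t : ℝ} (ht : 0 < t) :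
    ∫⁻ x in Ioi t, ENNReal.ofReal (x ^ b) = ENNReal.ofReal (-t ^ (b+1) / (b+1)) := by
  rw [← ofReal_integral_eq_lintegral_ofReal (integrableOn_Ioi_rpow_of_lt hb ht) ?_]
  · rw [integral_Ioi_rpow_of_lt hb ht]
  · filter_upwards [ae_restrict_mem measurableSet_Ioi] with x hx
    exact Real.rpow_nonneg (ht.trans hx).le b

lemma hswap (u g : ℝ → ENNReal) (hu : Measurable u) (hg : Measurable g) :
    ∫⁻ x in Ioi (0:ℝ), u x * ∫⁻ t in Ioo (0:ℝ) x, g t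
      = ∫⁻ t in Ioi (0:ℝ), g t * ∫⁻ x in Ioi t, u x := by
  set S : Set (ℝ × ℝ) := {z | 0 < z.2 ∧ z.2 < z.1} with hS
  have hSm : MeasurableSet S :=
    (measurableSet_lt measurable_const measurable_snd).inter
      (measurableSet_lt measurable_snd measurable_fst)
  set H : ℝ → ℝ → ENNReal := fun x t => S.indicator (fun z => u z.1 * g z.2) (x, t) with hH
  have hHm : Measurable (Function.uncurry H) := by
    have : Function.uncurry H = S.indicator (fun z => u z.1 * g z.2) := rfl
    rw [this]
    exact ((hu.comp measurable_fst).mul (hg.comp measurable_snd)).indicator hSm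
  have claim1 : ∀ x : ℝ, ∫⁻ t, H x t = u x * ∫⁻ t in Ioo (0:ℝ) x, g t := by
    intro x
    have : (fun t => H x t) = (Ioo (0:ℝ) x).indicator (fun t => u x * g t) := by
      funext t
      by_cases h : t ∈ Ioo (0:ℝ) x
      · rw [indicator_of_mem h]
        exact indicator_of_mem (by exact ⟨h.1, h.2⟩) _
      · rw [indicator_of_notMem h]
        exact indicator_of_notMem (by exact fun hz => h ⟨hz.1, hz.2⟩) _
    rw [this, lintegral_indicator measurableSet_Ioo, lintegral_const_mul _ hg]
  have claim2 : ∀ t : ℝ, ∫⁻ x, H x t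
      = (Ioi (0:ℝ)).indicator (fun t => g t * ∫⁻ x in Ioi t, u x) t := by
    intro t
    by_cases ht : t ∈ Ioi (0:ℝ)
    · rw [indicator_of_mem ht]
      have ht' : 0 < t := ht
      have : (fun x => H x t) = (Ioi t).indicator (fun x => u x * g t) := by
        funext x
        by_cases h : x ∈ Ioi t
        · rw [indicator_of_mem h]
          exact indicator_of_mem (show (x,t) ∈ S from ⟨ht', h⟩) _
        · rw [indicator_of_notMem h]
          exact indicator_of_notMem (fun hz => h hz.2) _
      rw [this, lintegral_indicator measurableSet_Ioi, lintegral_mul_const _ hu, mul_comm]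
    · rw [indicator_of_notMem ht]
      have hnt : ¬ (0:ℝ) < t := ht
      have : (fun x => H x t) = fun _ => 0 := by
        funext x
        exact indicator_of_notMem (fun hz => hnt hz.1) _
      rw [this, lintegral_const, zero_mul]
  calc ∫⁻ x in Ioi (0:ℝ), u x * ∫⁻ t in Ioo (0:ℝ) x, g t
      = ∫⁻ x, u x * ∫⁻ t in Ioo (0:ℝ) x, g t := by
        rw [← lintegral_indicator measurableSet_Ioi]
        congr 1
        funext x
        by_cases hx : x ∈ Ioi (0:ℝ)
        · exact indicator_of_mem hx _
        · rw [indicator_of_notMem hx,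
            Ioo_eq_empty (fun h : (0:ℝ) < x => hx h), Measure.restrict_empty,
            lintegral_zero_measure, mul_zero]
    _ = ∫⁻ x, ∫⁻ t, H x t := by simp_rw [claim1]
    _ = ∫⁻ t, ∫⁻ x, H x t := lintegral_lintegral_swap hHm.aemeasurable
    _ = ∫⁻ t in Ioi (0:ℝ), g t * ∫⁻ x in Ioi t, u x := by
        simp_rw [claim2]; rw [lintegral_indicator measurableSet_Ioi]

theorem hardy_classical (p : ℝ) (hp : 1 < p)
    (f : ℝ → ENNReal) (hf : Measurable f) :
    ∫⁻ x in Ioi (0:ℝ), ((ENNReal.ofReal x)⁻¹ * ∫⁻ t in Ioo (0:ℝ) x, f t) ^ p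
      ≤ ENNReal.ofReal ((p / (p - 1)) ^ p) * ∫⁻ x in Ioi (0:ℝ), f x ^ p := by
  have hp0 : (0:ℝ) < p := lt_trans one_pos hp
  have hp1 : (0:ℝ) < p - 1 := by linarith
  set q : ℝ := p / (p - 1) with hq
  have hq0 : (0:ℝ) < q := div_pos hp0 hp1
  have hpq : p.HolderConjugate q := Real.HolderConjugate.conjExponent hp
  have hinv : p⁻¹ + q⁻¹ = 1 := hpq.inv_add_inv_eq_one
  set s : ℝ := (p * q)⁻¹ with hs
  have hs0 : 0 < s := by positivity
  have hsp : s * p = q⁻¹ := by rw [hs]; field_simp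
  have hsq : s * q = p⁻¹ := by rw [hs]; field_simp
  have hpq' : p / q = p - 1 := by rw [hq]; field_simp
  set β : ℝ := -1 - q⁻¹ with hβdef
  have hβ : β < -1 := by
    have : 0 < q⁻¹ := by positivity
    simp only [hβdef]; linarith
  -- the weighted function
  set g : ℝ → ENNReal := fun t => f t ^ p * ENNReal.ofReal (t ^ q⁻¹) with hgdef
  have hgm : Measurable g := (hf.pow_const p).mul
    ((measurable_id.pow_const q⁻¹).ennreal_ofReal)
  set uu : ℝ → ENNReal := fun x => ENNReal.ofReal (x ^ β) with huudef
  have huum : Measurable uu := (measurable_id.pow_const β).ennreal_ofReal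
  set A : ℝ → ENNReal := fun x => ∫⁻ t in Ioo (0:ℝ) x, g t with hAdef
  -- pointwise Hölder bound
  have key : ∀ x : ℝ, x ∈ Ioi (0:ℝ) →
      ((ENNReal.ofReal x)⁻¹ * ∫⁻ t in Ioo (0:ℝ) x, f t) ^ p
        ≤ ENNReal.ofReal (q ^ (p/q)) * (uu x * A x) := by
    intro x hx
    have hx0 : (0:ℝ) < x := hx
    set u : ℝ → ENNReal := fun t => f t * ENNReal.ofReal (t ^ s) with hudef
    set v : ℝ → ENNReal := fun t => ENNReal.ofReal (t ^ (-s)) with hvdef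
    have hum : Measurable u := hf.mul ((measurable_id.pow_const s).ennreal_ofReal)
    have hvm : Measurable v := (measurable_id.pow_const (-s)).ennreal_ofReal
    have h1 : ∫⁻ t in Ioo (0:ℝ) x, f t = ∫⁻ t in Ioo (0:ℝ) x, (u * v) t := by
      refine setLIntegral_congr_fun measurableSet_Ioo (fun t ht => ?_)
      have ht0 : (0:ℝ) < t := ht.1
      simp only [hudef, hvdef, Pi.mul_apply]
      rw [mul_assoc, ← ENNReal.ofReal_mul (Real.rpow_nonneg ht0.le s),
        ← Real.rpow_add ht0, add_neg_cancel, Real.rpow_zero, ENNReal.ofReal_one, mul_one]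
    have h2 := ENNReal.lintegral_mul_le_Lp_mul_Lq (volume.restrict (Ioo (0:ℝ) x)) hpq
      hum.aemeasurable hvm.aemeasurable
    have h3 : ∫⁻ t in Ioo (0:ℝ) x, u t ^ p = A x := by
      refine setLIntegral_congr_fun measurableSet_Ioo (fun t ht => ?_)
      have ht0 : (0:ℝ) < t := ht.1
      simp only [hudef, hgdef]
      rw [ENNReal.mul_rpow_of_nonneg _ _ hp0.le,
        ENNReal.ofReal_rpow_of_pos (Real.rpow_pos_of_pos ht0 s),
        ← Real.rpow_mul ht0.le, hsp]
    have h4 : ∫⁻ t in Ioo (0:ℝ) x, v t ^ q = ENNReal.ofReal (x ^ q⁻¹ * q) := by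
      have hcongr : ∫⁻ t in Ioo (0:ℝ) x, v t ^ q
          = ∫⁻ t in Ioo (0:ℝ) x, ENNReal.ofReal (t ^ (-p⁻¹)) := by
        refine setLIntegral_congr_fun measurableSet_Ioo (fun t ht => ?_)
        have ht0 : (0:ℝ) < t := ht.1
        simp only [hvdef]
        rw [ENNReal.ofReal_rpow_of_pos (Real.rpow_pos_of_pos ht0 _),
          ← Real.rpow_mul ht0.le]
        congr 2
        rw [neg_mul, hsq]
      have hc : (-1:ℝ) < -p⁻¹ := by
        have : p⁻¹ < 1 := by rw [inv_lt_one_iff₀]; right; exact hp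
        linarith
      rw [hcongr, hlint_Ioo hc hx0]
      congr 1
      have he : -p⁻¹ + 1 = q⁻¹ := by linarith
      rw [he]
      rw [div_eq_mul_inv, inv_inv]
    calc ((ENNReal.ofReal x)⁻¹ * ∫⁻ t in Ioo (0:ℝ) x, f t) ^ p
        ≤ ((ENNReal.ofReal x)⁻¹ * (A x ^ (1/p) * ENNReal.ofReal (x ^ q⁻¹ * q) ^ (1/q))) ^ p := by
          gcongr
          rw [h1]
          calc ∫⁻ t in Ioo (0:ℝ) x, (u * v) t
              ≤ (∫⁻ t in Ioo (0:ℝ) x, u t ^ p) ^ (1/p)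
                  * (∫⁻ t in Ioo (0:ℝ) x, v t ^ q) ^ (1/q) := h2
            _ = A x ^ (1/p) * ENNReal.ofReal (x ^ q⁻¹ * q) ^ (1/q) := by rw [h3, h4]
      _ = ENNReal.ofReal (q ^ (p/q)) * (uu x * A x) := by
          have hBpos : (0:ℝ) < x ^ q⁻¹ * q := by positivity
          have hr : x ^ ((-1:ℝ)*p) * (x ^ q⁻¹ * q) ^ (1/q*p)
              = q ^ (p/q) * x ^ β := by
            rw [Real.mul_rpow (Real.rpow_nonneg hx0.le _) hq0.le,
              ← Real.rpow_mul hx0.le, ← mul_assoc, ← Real.rpow_add hx0]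
            have e1 : (-1:ℝ)*p + q⁻¹ * (1/q*p) = β := by
              rw [hβdef, hq]; field_simp; ring
            have e2 : (1:ℝ)/q*p = p/q := by ring
            rw [e1, e2, mul_comm]
          rw [ENNReal.mul_rpow_of_nonneg _ _ hp0.le,
            ENNReal.mul_rpow_of_nonneg _ _ hp0.le,
            ← ENNReal.rpow_mul (A x), one_div, inv_mul_cancel₀ hp0.ne', ENNReal.rpow_one,
            ← ENNReal.rpow_mul, ENNReal.ofReal_rpow_of_pos hBpos,
            ← ENNReal.rpow_neg_one, ← ENNReal.rpow_mul,
            ENNReal.ofReal_rpow_of_pos hx0]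
          simp only [huudef]
          rw [mul_comm (A x) _, ← mul_assoc, ← ENNReal.ofReal_mul (Real.rpow_nonneg hx0.le _),
            hr, ENNReal.ofReal_mul (Real.rpow_nonneg hq0.le _), mul_assoc]
  have hβ1 : β + 1 = -q⁻¹ := by rw [hβdef]; ring
  calc ∫⁻ x in Ioi (0:ℝ), ((ENNReal.ofReal x)⁻¹ * ∫⁻ t in Ioo (0:ℝ) x, f t) ^ p
      ≤ ∫⁻ x in Ioi (0:ℝ), ENNReal.ofReal (q ^ (p/q)) * (uu x * A x) := by
        refine lintegral_mono_ae ?_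
        filter_upwards [ae_restrict_mem measurableSet_Ioi] with x hx using key x hx
    _ = ENNReal.ofReal (q ^ (p/q)) * ∫⁻ x in Ioi (0:ℝ), uu x * A x :=
        lintegral_const_mul' _ _ ENNReal.ofReal_ne_top
    _ = ENNReal.ofReal (q ^ (p/q)) * ∫⁻ t in Ioi (0:ℝ), g t * ∫⁻ x in Ioi t, uu x := by
        rw [hswap uu g huum hgm]
    _ = ENNReal.ofReal (q ^ (p/q)) * (ENNReal.ofReal q * ∫⁻ t in Ioi (0:ℝ), f t ^ p) := by
        congr 1
        rw [← lintegral_const_mul' _ _ ENNReal.ofReal_ne_top]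
        refine setLIntegral_congr_fun measurableSet_Ioi (fun t ht => ?_)
        have ht0 : (0:ℝ) < t := ht
        have : ∫⁻ x in Ioi t, uu x = ENNReal.ofReal (t ^ (-q⁻¹) * q) := by
          simp only [huudef]
          rw [hlint_Ioi hβ ht0, hβ1]
          congr 1
          have hqq : (0:ℝ) < q⁻¹ := by positivity
          field_simp
        rw [this]
        simp only [hgdef]
        rw [mul_assoc, ← ENNReal.ofReal_mul (Real.rpow_nonneg ht0.le _), ← mul_assoc,
          ← Real.rpow_add ht0, add_neg_cancel, Real.rpow_zero, one_mul, mul_comm]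
    _ = ENNReal.ofReal (q ^ p) * ∫⁻ x in Ioi (0:ℝ), f x ^ p := by
        rw [← mul_assoc, ← ENNReal.ofReal_mul (Real.rpow_nonneg hq0.le _)]
        congr 2
        rw [← Real.rpow_add_one hq0.ne' (p/q), hpq']
        congr 1
        ring
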